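/- Let G be a subgroup of SL(2,ℤ) which contains a subgroup of finite index isomorphic to ℤ. Then either G contains a torsion element, or G is itself isomorphic to ℤ. -/

import Mathlib

open Subgroup

lemma aux_tf_virtZ {Γ : Type*} [Group Γ] (H : Subgroup Γ) [H.FiniteIndex]
    (e : H ≃* Multiplicative ℤ)
    (tf : ∀ t : Γ, ∀ m : ℕ, 1 ≤ m → t ^ m = 1 → t = 1) :
    Nonempty (Γ ≃* Multiplicative ℤ) := by
  -- Γ is infinite
  have hHinf : Infinite H := Infinite.of_injective e.symm e.symm.injective
  have hΓinf : Infinite Γ := Infinite.of_injective (Subtype.val : H → Γ) Subtype.coe_injective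
  -- torsion-free in zpow form, helper
  have tfz : ∀ (t : Γ) (j : ℤ), t ^ j = 1 → t = 1 ∨ j = 0 := by
    intro t j hj
    by_cases h0 : j = 0
    · exact Or.inr h0
    · left
      apply tf t j.natAbs (by omega)
      have : t ^ (j.natAbs : ℤ) = 1 := by
        rcases Int.natAbs_eq j with h | h
        · rw [← h]; exact_mod_cast hj
        · rw [show (j.natAbs : ℤ) = -j by omega, zpow_neg, hj, inv_one]
      exact_mod_cast this
  -- the normal core
  set K := H.normalCore with hK
  have hKH : K ≤ H := normalCore_le H
  haveI : K.Normal := normalCore_normal H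
  haveI : K.FiniteIndex := Subgroup.finiteIndex_normalCore H
  -- K is cyclic: it embeds into Multiplicative ℤ
  have hj : Function.Injective (e.toMonoidHom.comp (inclusion hKH)) :=
    e.injective.comp (inclusion_injective hKH)
  haveI : IsCyclic K :=
    isCyclic_of_surjective _ (MonoidHom.ofInjective hj).symm.surjective
  -- a generator of K
  obtain ⟨g, hg⟩ := IsCyclic.exists_generator (α := K)
  set a : Γ := (g : Γ) with ha
  have hmemK : ∀ x : Γ, x ∈ K → ∃ k : ℤ, a ^ k = x := by
    intro x hx
    obtain ⟨k, hk⟩ := hg ⟨x, hx⟩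
    exact ⟨k, by simpa using congrArg (Subtype.val) hk⟩
  have haK : a ∈ K := g.2
  -- a ≠ 1
  have ha1 : a ≠ 1 := by
    intro h1
    have hKbot : K = ⊥ := by
      ext x
      simp only [Subgroup.mem_bot]
      constructor
      · intro hx
        obtain ⟨k, hk⟩ := hmemK x hx
        rw [← hk, h1, one_zpow]
      · rintro rfl; exact K.one_mem
    have : K.index = 0 := by
      rw [hKbot, Subgroup.index_bot, Nat.card_eq_zero_of_infinite]
    exact ‹K.FiniteIndex›.index_ne_zero this
  -- zpow-injectivity of a
  have hazp : ∀ j : ℤ, a ^ j = 1 → j = 0 := fun j hj => (tfz a j hj).resolve_left ha1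
  -- index is positive
  have hind1 : 1 ≤ K.index := Nat.one_le_iff_ne_zero.mpr ‹K.FiniteIndex›.index_ne_zero
  -- a is central
  have hcen : ∀ x : Γ, x * a = a * x := by
    intro x
    obtain ⟨k, hk⟩ := hmemK (x * a * x⁻¹) (‹K.Normal›.conj_mem a haK x)
    obtain ⟨l, hl⟩ := hmemK (x⁻¹ * a * x⁻¹⁻¹) (‹K.Normal›.conj_mem a haK x⁻¹)
    -- a = x⁻¹ (a^k) x = (x⁻¹ a x)^k = a^(l*k)
    have h1 : a ^ (l * k) = a ^ (1 : ℤ) := by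
      rw [zpow_one, zpow_mul, hl, conj_zpow, hk]
      group
    have hlk : l * k = 1 := by
      have h2 : a ^ (l * k - 1) = 1 := by rw [zpow_sub, h1, zpow_one, mul_inv_cancel]
      have := hazp _ h2
      omega
    have hk1 : k = 1 ∨ k = -1 := Int.isUnit_iff.mp (IsUnit.of_mul_eq_one l (by linarith [hlk, mul_comm l k]))
    rcases hk1 with hk1 | hk1
    · rw [hk1, zpow_one] at hk
      exact (eq_mul_inv_iff_mul_eq.mp hk).symm
    · -- conjugation inverts a; derive a contradiction
      exfalso
      rw [hk1] at hk
      obtain ⟨m, hm⟩ := hmemK (x ^ K.index) (K.pow_index_mem x)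
      have hxm : x * (a ^ m) * x⁻¹ = a ^ (-m) := by
        rw [← conj_zpow, ← hk, ← zpow_mul]
        norm_num
      have h2 : a ^ m = a ^ (-m) := by
        rw [← hxm, hm]
        group
      have hm0 : m = 0 := by
        have : a ^ (m - -m) = 1 := by rw [zpow_sub, h2, mul_inv_cancel]
        have := hazp _ this
        omega
      have hx1 : x = 1 := tf x K.index hind1 (by rw [← hm, hm0, zpow_zero])
      rw [hx1] at hk
      simp only [one_mul, inv_one, mul_one] at hk
      have : a ^ ((-1 : ℤ) - 1) = 1 := by rw [zpow_sub, hk, zpow_one, mul_inv_cancel]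
      have := hazp _ this
      omega
  -- K is contained in the center
  have hKcen : K ≤ Subgroup.center Γ := by
    intro x hx
    obtain ⟨k, hk⟩ := hmemK x hx
    rw [Subgroup.mem_center_iff]
    intro y
    rw [← hk]
    exact Commute.zpow_right (hcen y) k
  haveI : (Subgroup.center Γ).FiniteIndex := Subgroup.finiteIndex_of_le hKcen
  set C := Subgroup.center Γ with hC
  set n := C.index with hn
  have hn1 : 1 ≤ n := Nat.one_le_iff_ne_zero.mpr Subgroup.FiniteIndex.index_ne_zero
  -- transfer homomorphism into the center
  let φ : Γ →* ↥C := MonoidHom.transferCenterPow Γ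
  have hφ : ∀ x : Γ, ((φ x : Γ)) = x ^ n := fun x => MonoidHom.transferCenterPow_apply x
  -- power map from the center into K
  set m := (K.subgroupOf C).index with hm
  have hm1 : 1 ≤ m := Nat.one_le_iff_ne_zero.mpr Subgroup.FiniteIndex.index_ne_zero
  let χ₀ : ↥C →* ↥C :=
    { toFun := fun x => x ^ m, map_one' := one_pow m,
      map_mul' := fun x y => (Commute.mul_pow (Subtype.ext (Subgroup.mem_center_iff.mp y.2 x)) m) }
  have hχ₀mem : ∀ x : ↥C, χ₀ x ∈ K.subgroupOf C := fun x => (K.subgroupOf C).pow_index_mem x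
  let χ₁ : ↥C →* ↥(K.subgroupOf C) := χ₀.codRestrict (K.subgroupOf C) hχ₀mem
  let χ : ↥C →* ↥K := (Subgroup.subgroupOfEquivOfLe hKcen).toMonoidHom.comp χ₁
  have hχ : ∀ x : ↥C, ((χ x : Γ)) = (x : Γ) ^ m := fun x => rfl
  -- the full embedding into Multiplicative ℤ
  let f : Γ →* Multiplicative ℤ := (e.toMonoidHom.comp (inclusion hKH)).comp (χ.comp φ)
  have hfinj : Function.Injective f := by
    rw [injective_iff_map_eq_one]
    intro x hx
    have h1 : χ (φ x) = 1 := by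
      apply hj
      simpa [f] using hx
    have h2 : ((χ (φ x) : Γ)) = 1 := by rw [h1]; rfl
    rw [hχ, hφ, ← pow_mul] at h2
    exact tf x (n * m) (Nat.one_le_iff_ne_zero.mpr (Nat.mul_ne_zero (by omega) (by omega))) h2
  haveI : IsCyclic Γ := isCyclic_of_surjective _ (MonoidHom.ofInjective hfinj).symm.surjective
  exact ⟨mulEquivOfCyclicCardEq (by
    rw [Nat.card_eq_zero_of_infinite, Nat.card_eq_zero_of_infinite])⟩
abbrev SL2Z := Matrix.SpecialLinearGroup (Fin 2) ℤ

/-- Let `G ≤ SL(2,ℤ)` contain a finite-index subgroup isomorphic to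
`ℤ`.  Then either `G` contains a torsion element, or `G` itself is isomorphic to `ℤ`. -/
theorem subgroup_sl2z_torsion_or_Z_of_finite_index_Z
    (G : Subgroup SL2Z)
    (h : ∃ H : Subgroup G, H.FiniteIndex ∧ Nonempty (H ≃* Multiplicative ℤ)) :
    (∃ T ∈ G, T ≠ 1 ∧ ∃ m : ℕ, 1 ≤ m ∧ T ^ m = 1) ∨
      Nonempty (G ≃* Multiplicative ℤ) := by
  obtain ⟨H, hfi, ⟨e⟩⟩ := h
  rw [or_iff_not_imp_left]
  intro hnt
  refine aux_tf_virtZ H e ?_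
  intro t m hm htm
  by_contra ht1
  apply hnt
  refine ⟨(t : SL2Z), t.2, ?_, m, hm, ?_⟩
  · intro h1
    exact ht1 (Subtype.ext h1)
  · have : ((t ^ m : G) : SL2Z) = ((1 : G) : SL2Z) := congrArg _ htm
    simpa using this
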